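/- There is a unique R-algebra automorphism σ of the Ariki–Koike algebra H satisfying σ(T_0) = εT_0 and σ(T_i) = T_i for 1 ≤ i ≤ n−1. Moreover σ^p is the identity automorphism of H, and σ(L_k) = εL_k for all 1 ≤ k ≤ n. -/

import Mathlib

noncomputable section

namespace AK

/-- The generator `T_i` inside the free algebra on `n` generators
(defined as `0` for the never-used out-of-range indices). -/
def gen (R : Type*) [CommRing R] (n : ℕ) (i : ℕ) : FreeAlgebra R (Fin n) :=
  if h : i < n then FreeAlgebra.ι R (⟨i, h⟩ : Fin n) else 0

/-- The defining relations of the Ariki–Koike algebra `H_{r,n}` with `r = p * d` and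
cyclotomic parameters `(ε Q_1, …, ε Q_d, ε² Q_1, …, ε^p Q_d)`:
`∏_{t=1}^{p} ∏_{i=1}^{d} (T_0 - ε^t Q_i) = 0`; `(T_i - q)(T_i + 1) = 0` for `1 ≤ i ≤ n-1`;
`T_0T_1T_0T_1 = T_1T_0T_1T_0`; `T_{i+1}T_iT_{i+1} = T_iT_{i+1}T_i` for `1 ≤ i ≤ n-2`; and
`T_iT_j = T_jT_i` for `0 ≤ i < j-1 ≤ n-2`. -/
inductive Rel (R : Type*) [CommRing R] (n p d : ℕ) (ε q : R) (Q : Fin d → R) :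
    FreeAlgebra R (Fin n) → FreeAlgebra R (Fin n) → Prop
  | cyclotomic :
      Rel R n p d ε q Q
        (Polynomial.aeval (gen R n 0)
          (∏ t ∈ Finset.Icc 1 p, ∏ i : Fin d, (Polynomial.X - Polynomial.C (ε ^ t * Q i)))) 0
  | quadratic (i : ℕ) (h1 : 1 ≤ i) (h2 : i ≤ n - 1) :
      Rel R n p d ε q Q
        ((gen R n i - algebraMap R (FreeAlgebra R (Fin n)) q) * (gen R n i + 1)) 0
  | braid0 :
      Rel R n p d ε q Q
        (gen R n 0 * gen R n 1 * gen R n 0 * gen R n 1)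
        (gen R n 1 * gen R n 0 * gen R n 1 * gen R n 0)
  | braid (i : ℕ) (h1 : 1 ≤ i) (h2 : i ≤ n - 2) :
      Rel R n p d ε q Q
        (gen R n (i + 1) * gen R n i * gen R n (i + 1))
        (gen R n i * gen R n (i + 1) * gen R n i)
  | comm (i j : ℕ) (h1 : i < j - 1) (h2 : j - 1 ≤ n - 2) :
      Rel R n p d ε q Q (gen R n i * gen R n j) (gen R n j * gen R n i)

/-- The Ariki–Koike algebra `H_{r,n}`, `r = p * d`: the quotient of the free `R`-algebra on the
`n` generators `T_0, …, T_{n-1}` by the two-sided ideal generated by the defining relations. -/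
abbrev H (R : Type*) [CommRing R] (n p d : ℕ) (ε q : R) (Q : Fin d → R) :=
  RingQuot (Rel R n p d ε q Q)

/-- The images `T_i` of the generators in the Ariki–Koike algebra. -/
def T (R : Type*) [CommRing R] (n p d : ℕ) (ε q : R) (Q : Fin d → R) (i : ℕ) :
    H R n p d ε q Q :=
  RingQuot.mkAlgHom R (Rel R n p d ε q Q) (gen R n i)

/-- The Jucys–Murphy elements: `L_1 = T_0` and `L_{k+1} = q⁻¹ T_k L_k T_k` for `1 ≤ k < n`. -/
def L (R : Type*) [CommRing R] (n p d : ℕ) (ε q : R) (Q : Fin d → R) : ℕ → H R n p d ε q Q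
  | 0 => 1
  | 1 => T R n p d ε q Q 0
  | (k + 2) =>
      algebraMap R (H R n p d ε q Q) (Ring.inverse q) * T R n p d ε q Q (k + 1) *
        L R n p d ε q Q (k + 1) * T R n p d ε q Q (k + 1)

/-- `ε ^ s` for an integer exponent `s`, read modulo `p`. -/
def epow (R : Type*) [CommRing R] (p : ℕ) (ε : R) (s : ℤ) : R := ε ^ (s % (p : ℤ)).toNat

/-- `L^{(s)}_k = ∏_{i=1}^{d} (L_k - ε^s Q_i)` (depending only on `s` mod `p`). -/
def Ls (R : Type*) [CommRing R] (n p d : ℕ) (ε q : R) (Q : Fin d → R) (s : ℤ) (k : ℕ) :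
    H R n p d ε q Q :=
  Polynomial.aeval (L R n p d ε q Q k)
    (∏ i : Fin d, (Polynomial.X - Polynomial.C (epow R p ε s * Q i)))

/-- `∏_{l ≤ k ≤ m} ∏_{lo ≤ s ≤ hi} L^{(s)}_k`, for a consecutive range `lo..hi` of
superscripts (read modulo `p`). -/
def LLg (R : Type*) [CommRing R] (n p d : ℕ) (ε q : R) (Q : Fin d → R)
    (lo hi : ℤ) (l m : ℕ) : H R n p d ε q Q :=
  ((List.range (m + 1 - l)).map fun (x : ℕ) =>
    ((List.range (hi + 1 - lo).toNat).map fun (y : ℕ) =>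
      Ls R n p d ε q Q (lo + (y : ℤ)) (l + x)).prod).prod

/-- `L^{(t)}_{l,m} = ∏_{l ≤ k ≤ m} L^{(t)}_k`. -/
def Lt (R : Type*) [CommRing R] (n p d : ℕ) (ε q : R) (Q : Fin d → R)
    (t : ℤ) (l m : ℕ) : H R n p d ε q Q :=
  LLg R n p d ε q Q t t l m

/-- `L^{(i,j)}_{l,m} = ∏_{l ≤ k ≤ m} ∏_{s ∈ I_{ij}} L^{(s)}_k` where `I_{ij} = {i, …, j}` if
`i ≤ j` and `I_{ij} = {1, …, j} ∪ {i, …, p}` if `i > j` (as sets of exponents modulo `p`,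
`I_{ij}` is the consecutive range `i, i+1, …, j + p` when `i > j`). -/
def LL (R : Type*) [CommRing R] (n p d : ℕ) (ε q : R) (Q : Fin d → R)
    (i j : ℕ) (l m : ℕ) : H R n p d ε q Q :=
  LLg R n p d ε q Q (i : ℤ) (if i ≤ j then (j : ℤ) else (j : ℤ) + (p : ℤ)) l m

/-- `T^{⟨k⟩}_{a,b} = (T_{a+b+k-1} T_{a+b+k-2} ⋯ T_{k+1})^b`, and `T_{a,b} = T^{⟨0⟩}_{a,b}`. -/
def Tw (R : Type*) [CommRing R] (n p d : ℕ) (ε q : R) (Q : Fin d → R)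
    (k a b : ℕ) : H R n p d ε q Q :=
  (((List.range (a + b - 1)).map fun (j : ℕ) => T R n p d ε q Q (a + b + k - 1 - j)).prod) ^ b

/-- Partial sums `b_i^j = b_i + b_{i+1} + ⋯ + b_j` (zero when `i > j`). -/
def Bsum (b : ℕ → ℕ) (i j : ℕ) : ℕ := ∑ t ∈ Finset.Icc i j, b t

/-- The element `v_b^{(t)}`; `v_b = v_b^{(0)}` is
`L^{(1,p-1)}_{1,b_p} T_{b_p,b_1^{p-1}} L^{(1,p-2)}_{1,b_{p-1}} T_{b_{p-1},b_1^{p-2}} ⋯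
L^{(1,1)}_{1,b_2} T_{b_2,b_1^1} ⋅ L^{(2)}_{1,b_1^1} L^{(3)}_{1,b_1^2} ⋯ L^{(p)}_{1,b_1^{p-1}}`
and `v_b^{(t)}` is obtained by shifting every superscript `s` to `s + t`. -/
def v (R : Type*) [CommRing R] (n p d : ℕ) (ε q : R) (Q : Fin d → R)
    (b : ℕ → ℕ) (t : ℤ) : H R n p d ε q Q :=
  (((List.range (p - 1)).map fun (x : ℕ) =>
      LLg R n p d ε q Q (1 + t) (((p - 1 - x : ℕ) : ℤ) + t) 1 (b (p - x)) *
        Tw R n p d ε q Q 0 (b (p - x)) (Bsum b 1 (p - 1 - x))).prod) *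
  (((List.range (p - 1)).map fun (x : ℕ) =>
      Lt R n p d ε q Q ((x : ℤ) + 2 + t) 1 (Bsum b 1 (x + 1))).prod)

/-- `Y_t = L^{(t+1, t+p-1)}_{1, b_t} T_{b_t, n - b_t}` (superscripts read modulo `p`). -/
def Y (R : Type*) [CommRing R] (n p d : ℕ) (ε q : R) (Q : Fin d → R)
    (b : ℕ → ℕ) (t : ℕ) : H R n p d ε q Q :=
  LLg R n p d ε q Q ((t : ℤ) + 1) ((t : ℤ) + (p : ℤ) - 1) 1 (b t) *
    Tw R n p d ε q Q 0 (b t) (n - b t)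

/-- `T_b = T^{⟨b_1^{p-2}⟩}_{b_{p-1}, b_p^p} ⋯ T^{⟨b_1^1⟩}_{b_2, b_3^p} T_{b_1, b_2^p}`. -/
def Tcomp (R : Type*) [CommRing R] (n p d : ℕ) (ε q : R) (Q : Fin d → R)
    (b : ℕ → ℕ) : H R n p d ε q Q :=
  ((List.range (p - 1)).map fun (x : ℕ) =>
    Tw R n p d ε q Q (Bsum b 1 (p - 2 - x)) (b (p - 1 - x)) (Bsum b (p - x) p)).prod

-- AUX START
open Polynomial in
lemma shift_prod {M : Type*} [CommMonoid M] {p : ℕ} (hp : 1 ≤ p) (g : ℕ → M)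
    (h : g 0 = g p) :
    ∏ t ∈ Finset.Icc 1 p, g (t - 1) = ∏ t ∈ Finset.Icc 1 p, g t := by
  obtain ⟨m, rfl⟩ : ∃ m, p = m + 1 := ⟨p - 1, (Nat.succ_pred_eq_of_pos hp).symm⟩
  rw [← Finset.Ico_add_one_right_eq_Icc, Finset.prod_Ico_eq_prod_range, Finset.prod_Ico_eq_prod_range]
  have e1 : ∀ i, g (1 + i - 1) = g i := fun i => by congr 1; omega
  simp only [Nat.add_sub_cancel]
  rw [Finset.prod_congr rfl fun i _ => e1 i, Finset.prod_range_succ', Finset.prod_range_succ]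
  rw [h]
  congr 1
  · exact Finset.prod_congr rfl fun i _ => by rw [Nat.add_comm]
  · rw [Nat.add_comm]

open Polynomial in
lemma P_comp {R : Type*} [CommRing R] {p d : ℕ} {ε : R} {Q : Fin d → R}
    (hp : 1 ≤ p) (hε1 : ε ^ p = 1) :
    (∏ t ∈ Finset.Icc 1 p, ∏ i : Fin d, (X - C (ε ^ t * Q i))).comp (C ε * X)
      = C (ε ^ (p * d)) * ∏ t ∈ Finset.Icc 1 p, ∏ i : Fin d, (X - C (ε ^ t * Q i)) := by
  rw [comp_eq_aeval, map_prod]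
  have step : ∀ t ∈ Finset.Icc 1 p,
      (aeval (C ε * X)) (∏ i : Fin d, (X - C (ε ^ t * Q i)))
        = (C ε) ^ d * ∏ i : Fin d, (X - C (ε ^ (t - 1) * Q i)) := by
    intro t ht
    rw [map_prod]
    have ht1 : 1 ≤ t := (Finset.mem_Icc.mp ht).1
    have factor : ∀ i : Fin d,
        (aeval (C ε * X)) (X - C (ε ^ t * Q i)) = C ε * (X - C (ε ^ (t - 1) * Q i)) := by
      intro i
      have het : ε ^ t = ε * ε ^ (t - 1) := by
        conv_lhs => rw [show t = (t - 1) + 1 by omega]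
        ring
      rw [map_sub, aeval_X, aeval_C, Polynomial.algebraMap_eq, mul_sub, ← C_mul, het, mul_assoc]
    rw [Finset.prod_congr rfl fun i _ => factor i, Finset.prod_mul_distrib,
      Finset.prod_const, Finset.card_univ, Fintype.card_fin]
  rw [Finset.prod_congr rfl step, Finset.prod_mul_distrib, Finset.prod_const, Nat.card_Icc,
    Nat.add_sub_cancel, ← pow_mul, ← C_pow, mul_comm d p]
  congr 1
  refine shift_prod hp (fun t => ∏ i : Fin d, (X - C (ε ^ t * Q i))) ?_
  simp [hε1]

variable {R : Type*} [CommRing R] {n p d : ℕ} {ε q : R} {Q : Fin d → R}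

lemma T_def (i : ℕ) :
    T R n p d ε q Q i = RingQuot.mkAlgHom R (Rel R n p d ε q Q) (gen R n i) := rfl

open Polynomial in
lemma aeval_eps_T0 (hn : 3 ≤ n) (hp : 1 ≤ p) (hε1 : ε ^ p = 1) :
    Polynomial.aeval (algebraMap R (H R n p d ε q Q) ε * T R n p d ε q Q 0)
      (∏ t ∈ Finset.Icc 1 p, ∏ i : Fin d, (X - C (ε ^ t * Q i))) = 0 := by
  set P : R[X] := ∏ t ∈ Finset.Icc 1 p, ∏ i : Fin d, (X - C (ε ^ t * Q i)) with hP
  have h0 : Polynomial.aeval (T R n p d ε q Q 0) P = 0 := by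
    have hr := RingQuot.mkAlgHom_rel R (Rel.cyclotomic (R := R) (n := n) (p := p) (d := d)
      (ε := ε) (q := q) (Q := Q))
    rw [map_zero] at hr
    rw [T_def, Polynomial.aeval_algHom_apply]
    exact hr
  have h1 : algebraMap R (H R n p d ε q Q) ε * T R n p d ε q Q 0
      = Polynomial.aeval (T R n p d ε q Q 0) (C ε * X) := by
    rw [map_mul, aeval_C, aeval_X]
  rw [h1, ← Polynomial.aeval_comp, P_comp hp hε1, map_mul, aeval_C, h0, mul_zero]

def sigmaFun (R : Type*) [CommRing R] (n p d : ℕ) (ε q : R) (Q : Fin d → R) :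
    Fin n → H R n p d ε q Q :=
  fun i => if (i : ℕ) = 0 then algebraMap R (H R n p d ε q Q) ε * T R n p d ε q Q 0
    else T R n p d ε q Q (i : ℕ)

lemma lift_sigmaFun_gen (i : ℕ) (h : i < n) :
    FreeAlgebra.lift R (sigmaFun R n p d ε q Q) (gen R n i)
      = sigmaFun R n p d ε q Q ⟨i, h⟩ := by
  rw [gen, dif_pos h, FreeAlgebra.lift_ι_apply]

lemma lift_sigmaFun_gen_pos (i : ℕ) (h1 : 1 ≤ i) (h : i < n) :
    FreeAlgebra.lift R (sigmaFun R n p d ε q Q) (gen R n i) = T R n p d ε q Q i := by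
  rw [lift_sigmaFun_gen i h]
  simp only [sigmaFun, Fin.val_mk]
  rw [if_neg (show ¬ i = 0 by omega)]

lemma lift_sigmaFun_gen_zero (h0 : 0 < n) :
    FreeAlgebra.lift R (sigmaFun R n p d ε q Q) (gen R n 0)
      = algebraMap R (H R n p d ε q Q) ε * T R n p d ε q Q 0 := by
  rw [lift_sigmaFun_gen 0 h0]
  simp [sigmaFun]

lemma sigma_rel (hn : 3 ≤ n) (hp : 1 ≤ p) (hε1 : ε ^ p = 1) :
    ∀ ⦃x y⦄, Rel R n p d ε q Q x y →
      FreeAlgebra.lift R (sigmaFun R n p d ε q Q) x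
        = FreeAlgebra.lift R (sigmaFun R n p d ε q Q) y := by
  intro x y h
  induction h with
  | cyclotomic =>
      rw [map_zero, ← Polynomial.aeval_algHom_apply, lift_sigmaFun_gen_zero (by omega)]
      exact aeval_eps_T0 (q := q) hn hp hε1
  | quadratic i h1 h2 =>
      have hi : i < n := by omega
      rw [map_zero, map_mul, map_sub, map_add, map_one, AlgHom.commutes,
        lift_sigmaFun_gen_pos i h1 hi]
      have hr := RingQuot.mkAlgHom_rel R (Rel.quadratic (R := R) (p := p) (d := d)
        (ε := ε) (q := q) (Q := Q) i h1 h2)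
      simpa [T_def, map_mul, map_sub, map_add, map_one, map_zero, AlgHom.commutes] using hr
  | braid0 =>
      have h0 : 0 < n := by omega
      have h1n : 1 < n := by omega
      have hr := RingQuot.mkAlgHom_rel R (Rel.braid0 (R := R) (n := n) (p := p) (d := d)
        (ε := ε) (q := q) (Q := Q))
      simp only [map_mul] at hr ⊢
      rw [lift_sigmaFun_gen_zero h0, lift_sigmaFun_gen_pos 1 le_rfl h1n]
      simp only [T_def, ← Algebra.smul_def, smul_mul_assoc, mul_smul_comm, smul_smul]
      rw [hr]
  | braid i h1 h2 =>
      have hi : i < n := by omega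
      have hi1 : i + 1 < n := by omega
      have hr := RingQuot.mkAlgHom_rel R (Rel.braid (R := R) (p := p) (d := d)
        (ε := ε) (q := q) (Q := Q) i h1 h2)
      simp only [map_mul] at hr ⊢
      rw [lift_sigmaFun_gen_pos i h1 hi, lift_sigmaFun_gen_pos (i + 1) (Nat.le_add_left 1 i) hi1]
      simp only [T_def]
      exact hr
  | comm i j h1 h2 =>
      have hj2 : 2 ≤ j := by omega
      have hj : j < n := by omega
      have hi : i < n := by omega
      have hr := RingQuot.mkAlgHom_rel R (Rel.comm (R := R) (p := p) (d := d)
        (ε := ε) (q := q) (Q := Q) i j h1 h2)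
      simp only [map_mul] at hr ⊢
      rw [lift_sigmaFun_gen_pos j (by omega) hj]
      rcases Nat.eq_zero_or_pos i with hi0 | hi0
      · subst hi0
        rw [lift_sigmaFun_gen_zero (by omega)]
        simp only [T_def, ← Algebra.smul_def, smul_mul_assoc, mul_smul_comm]
        rw [hr]
      · rw [lift_sigmaFun_gen_pos i hi0 hi]
        simp only [T_def]
        exact hr

lemma homExt {B : Type*} [Semiring B] [Algebra R B] (f g : H R n p d ε q Q →ₐ[R] B)
    (h : ∀ i : ℕ, i < n → f (T R n p d ε q Q i) = g (T R n p d ε q Q i)) : f = g := by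
  apply RingQuot.ringQuot_ext'
  apply FreeAlgebra.hom_ext
  funext i
  have := h i i.isLt
  simpa [T_def, gen, i.isLt] using this
-- AUX END

end AK

/-- There is a unique `R`-algebra automorphism `σ` of `H` with
`σ(T_0) = ε T_0` and `σ(T_i) = T_i` for `1 <= i <= n-1`.  Moreover `σ^p` is the identity
automorphism of `H`, and `σ(L_k) = ε L_k` for all `1 <= k <= n`. -/
theorem stmt_15 (R : Type*) [CommRing R] (n p d : ℕ) (hn : 3 ≤ n) (hp : 2 ≤ p) (hd : 1 ≤ d)
    (ε q : R) (Q : Fin d → R) (hε : IsPrimitiveRoot ε p)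
    (hq : IsUnit q) (hQ : ∀ i, IsUnit (Q i)) :
    (∃! σ : AK.H R n p d ε q Q ≃ₐ[R] AK.H R n p d ε q Q,
      σ (AK.T R n p d ε q Q 0) = algebraMap R (AK.H R n p d ε q Q) ε * AK.T R n p d ε q Q 0 ∧
        ∀ i : ℕ, 1 ≤ i → i ≤ n - 1 → σ (AK.T R n p d ε q Q i) = AK.T R n p d ε q Q i) ∧
    (∀ σ : AK.H R n p d ε q Q ≃ₐ[R] AK.H R n p d ε q Q,
      (σ (AK.T R n p d ε q Q 0) = algebraMap R (AK.H R n p d ε q Q) ε * AK.T R n p d ε q Q 0 ∧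
        ∀ i : ℕ, 1 ≤ i → i ≤ n - 1 → σ (AK.T R n p d ε q Q i) = AK.T R n p d ε q Q i) →
      σ ^ p = 1 ∧
        ∀ k : ℕ, 1 ≤ k → k ≤ n →
          σ (AK.L R n p d ε q Q k) = algebraMap R (AK.H R n p d ε q Q) ε * AK.L R n p d ε q Q k) := by
  classical
  have hε1 : ε ^ p = 1 := hε.pow_eq_one
  have hp1 : 1 ≤ p := by omega
  set σA : AK.H R n p d ε q Q →ₐ[R] AK.H R n p d ε q Q :=
    RingQuot.liftAlgHom R ⟨FreeAlgebra.lift R (AK.sigmaFun R n p d ε q Q),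
      AK.sigma_rel hn hp1 hε1⟩ with hσAdef
  have hσT : ∀ i : ℕ, σA (AK.T R n p d ε q Q i)
      = FreeAlgebra.lift R (AK.sigmaFun R n p d ε q Q) (AK.gen R n i) := by
    intro i
    rw [AK.T_def, hσAdef, RingQuot.liftAlgHom_mkAlgHom_apply]
  have hσ0 : σA (AK.T R n p d ε q Q 0)
      = algebraMap R (AK.H R n p d ε q Q) ε * AK.T R n p d ε q Q 0 := by
    rw [hσT 0, AK.lift_sigmaFun_gen_zero (by omega)]
  have hσi : ∀ i : ℕ, 1 ≤ i → i < n → σA (AK.T R n p d ε q Q i) = AK.T R n p d ε q Q i := by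
    intro i h1 h2
    rw [hσT i, AK.lift_sigmaFun_gen_pos i h1 h2]
  -- powers of σA
  have hpow0 : ∀ k : ℕ, (σA ^ k) (AK.T R n p d ε q Q 0)
      = algebraMap R (AK.H R n p d ε q Q) (ε ^ k) * AK.T R n p d ε q Q 0 := by
    intro k
    induction k with
    | zero => simp
    | succ k ih =>
        rw [pow_succ, AlgHom.mul_apply, hσ0, map_mul, AlgHom.commutes, ih, ← mul_assoc,
          ← map_mul, ← pow_succ']
  have hpowi : ∀ (k i : ℕ), 1 ≤ i → i < n →
      (σA ^ k) (AK.T R n p d ε q Q i) = AK.T R n p d ε q Q i := by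
    intro k i h1 h2
    induction k with
    | zero => simp
    | succ k ih => rw [pow_succ, AlgHom.mul_apply, hσi i h1 h2, ih]
  have hσp : σA ^ p = 1 := by
    apply AK.homExt
    intro i hi
    rcases Nat.eq_zero_or_pos i with rfl | h1
    · rw [hpow0 p, hε1, map_one, one_mul, AlgHom.one_apply]
    · rw [hpowi p i h1 hi, AlgHom.one_apply]
  have hmul1 : σA * σA ^ (p - 1) = 1 := by
    rw [← pow_succ', show p - 1 + 1 = p by omega]; exact hσp
  have hmul2 : σA ^ (p - 1) * σA = 1 := by
    rw [← pow_succ, show p - 1 + 1 = p by omega]; exact hσp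
  set σ : AK.H R n p d ε q Q ≃ₐ[R] AK.H R n p d ε q Q :=
    AlgEquiv.ofAlgHom σA (σA ^ (p - 1)) hmul1 hmul2 with hσdef
  have hσapp : ∀ x, σ x = σA x := fun x => rfl
  have hprop0 : σ (AK.T R n p d ε q Q 0)
      = algebraMap R (AK.H R n p d ε q Q) ε * AK.T R n p d ε q Q 0 := by
    rw [hσapp, hσ0]
  have hpropi : ∀ i : ℕ, 1 ≤ i → i ≤ n - 1 →
      σ (AK.T R n p d ε q Q i) = AK.T R n p d ε q Q i := by
    intro i h1 h2
    rw [hσapp, hσi i h1 (by omega)]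
  -- the second bullet, proved for an arbitrary τ with the generator properties
  have main2 : ∀ τ : AK.H R n p d ε q Q ≃ₐ[R] AK.H R n p d ε q Q,
      (τ (AK.T R n p d ε q Q 0)
          = algebraMap R (AK.H R n p d ε q Q) ε * AK.T R n p d ε q Q 0 ∧
        ∀ i : ℕ, 1 ≤ i → i ≤ n - 1 → τ (AK.T R n p d ε q Q i) = AK.T R n p d ε q Q i) →
      τ ^ p = 1 ∧
        ∀ k : ℕ, 1 ≤ k → k ≤ n →
          τ (AK.L R n p d ε q Q k)
            = algebraMap R (AK.H R n p d ε q Q) ε * AK.L R n p d ε q Q k := by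
    rintro τ ⟨hτ0, hτi⟩
    constructor
    · -- τ ^ p = 1
      have hq0 : ∀ k : ℕ, (τ ^ k) (AK.T R n p d ε q Q 0)
          = algebraMap R (AK.H R n p d ε q Q) (ε ^ k) * AK.T R n p d ε q Q 0 := by
        intro k
        induction k with
        | zero => simp
        | succ k ih =>
            rw [pow_succ, AlgEquiv.mul_apply, hτ0, map_mul, AlgEquiv.commutes, ih, ← mul_assoc,
              ← map_mul, ← pow_succ']
      have hqi : ∀ (k i : ℕ), 1 ≤ i → i < n →
          (τ ^ k) (AK.T R n p d ε q Q i) = AK.T R n p d ε q Q i := by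
        intro k i h1 h2
        induction k with
        | zero => simp
        | succ k ih => rw [pow_succ, AlgEquiv.mul_apply, hτi i h1 (by omega), ih]
      have heq : ((τ ^ p : AK.H R n p d ε q Q ≃ₐ[R] AK.H R n p d ε q Q) :
          AK.H R n p d ε q Q →ₐ[R] AK.H R n p d ε q Q) = AlgHom.id R _ := by
        apply AK.homExt
        intro i hi
        rcases Nat.eq_zero_or_pos i with rfl | h1
        · simpa [hε1] using hq0 p
        · simpa using hqi p i h1 hi
      ext x
      have := DFunLike.congr_fun heq x
      simpa using this
    · -- τ (L k) = ε • L k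
      intro k
      induction k with
      | zero => intro h; omega
      | succ k ih =>
          intro _ h2
          rcases k with _ | m
          · simpa [AK.L] using hτ0
          · have hm1 : τ (AK.L R n p d ε q Q (m + 1))
                = algebraMap R (AK.H R n p d ε q Q) ε * AK.L R n p d ε q Q (m + 1) :=
              ih (by omega) (by omega)
            show τ (AK.L R n p d ε q Q (m + 2)) = _
            rw [AK.L, map_mul, map_mul, map_mul, AlgEquiv.commutes,
              hτi (m + 1) (by omega) (by omega), hm1]
            simp only [← Algebra.smul_def, mul_smul_comm, smul_mul_assoc]
            rw [smul_comm]
  refine ⟨⟨σ, ⟨hprop0, hpropi⟩, ?_⟩, main2⟩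
  rintro τ ⟨hτ0, hτi⟩
  have heq : (τ : AK.H R n p d ε q Q →ₐ[R] AK.H R n p d ε q Q)
      = (σ : AK.H R n p d ε q Q →ₐ[R] AK.H R n p d ε q Q) := by
    apply AK.homExt
    intro i hi
    rcases Nat.eq_zero_or_pos i with rfl | h1
    · simpa using hτ0.trans hprop0.symm
    · simpa using (hτi i h1 (by omega)).trans (hpropi i h1 (by omega)).symm
  ext x
  have := DFunLike.congr_fun heq x
  simpa using this
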